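/- arXiv:2509.04158 — 5 statements merged into one kernel-verified Lean document; each statement's English description precedes it below -/
import Mathlib

section
/- The polynomials p_n(x) = x H_n'(x) - H_n(x) satisfy, for all n ≥ 1, the three-term recursion in the degree variable: (n(n-1)/2) p_{n-2}(x) + ((2n-1)/4) p_n(x) + ((n-1)/(8(n+1))) p_{n+2}(x) = (x²/2) p_n(x), with the convention p_{-1} = 0. -/
open Polynomial

/-- The physicists' Hermite polynomials, via `H_{n+1} = 2x H_n - H_n'`. -/
noncomputable def physHermite : ℕ → Polynomial ℝ
  | 0 => 1
  | n + 1 => C 2 * X * physHermite n - derivative (physHermite n)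

/-- `p_k = x H_k' - H_k` for `k ≥ 0`, with `p_k = 0` for negative indices. -/
noncomputable def pGap (k : ℤ) : Polynomial ℝ :=
  if 0 ≤ k then X * derivative (physHermite k.toNat) - physHermite k.toNat else 0


lemma physHermite_succ (n : ℕ) :
    physHermite (n + 1) = C 2 * X * physHermite n - derivative (physHermite n) := rfl

lemma deriv_physHermite (n : ℕ) :
    derivative (physHermite (n + 1)) = C (2 * ((n : ℝ) + 1)) * physHermite n := by
  induction n with
  | zero =>
      simp [physHermite_succ, physHermite]
  | succ k ih =>
      rw [physHermite_succ (k+1), ih, derivative_sub, derivative_mul, derivative_mul,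
        derivative_C, derivative_X, derivative_C_mul, ih, physHermite_succ k]
      push_cast
      simp only [map_mul, map_add, map_one, map_ofNat]
      ring

lemma pGap_natCast (k : ℕ) :
    pGap (k : ℤ) = X * derivative (physHermite k) - physHermite k := by
  simp [pGap]

/-- The three-term recursion in the degree variable:
`(n(n-1)/2) p_{n-2} + ((2n-1)/4) p_n + ((n-1)/(8(n+1))) p_{n+2} = (x²/2) p_n` for `n ≥ 1`. -/
theorem one_gap_recursion (n : ℕ) (hn : 1 ≤ n) :
    C ((n : ℝ) * ((n : ℝ) - 1) / 2) * pGap ((n : ℤ) - 2)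
      + C ((2 * (n : ℝ) - 1) / 4) * pGap (n : ℤ)
      + C (((n : ℝ) - 1) / (8 * ((n : ℝ) + 1))) * pGap ((n : ℤ) + 2) =
    C (1 / 2) * X ^ 2 * pGap (n : ℤ) := by
  rcases n with _ | _ | m
  · omega
  · -- n = 1
    have h1 : pGap ((1 : ℕ) : ℤ) = 0 := by
      rw [pGap_natCast]
      have h : physHermite 1 = C 2 * X := by
        rw [physHermite_succ]
        simp [physHermite]
      rw [h]
      simp
    have h2 : pGap (((1 : ℕ) : ℤ) - 2) = 0 := by
      norm_num [pGap]
    push_cast at h1 h2 ⊢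
    rw [h1, h2]
    norm_num
  · -- n = m + 2
    have i1 : ((m + 2 : ℕ) : ℤ) - 2 = ((m : ℕ) : ℤ) := by push_cast; ring
    have i2 : ((m + 2 : ℕ) : ℤ) + 2 = ((m + 4 : ℕ) : ℤ) := by push_cast; ring
    simp only [show m + 1 + 1 = m + 2 from rfl]
    rw [i1, i2, pGap_natCast, pGap_natCast, pGap_natCast]
    apply Polynomial.funext
    intro x
    have hD : ∀ k : ℕ, eval x (derivative (physHermite k)) =
        2 * x * eval x (physHermite k) - eval x (physHermite (k + 1)) := by
      intro k
      rw [physHermite_succ k]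
      simp
    have hrec : ∀ k : ℕ, eval x (physHermite (k + 2)) =
        2 * x * eval x (physHermite (k + 1)) - 2 * ((k : ℝ) + 1) * eval x (physHermite k) := by
      intro k
      rw [physHermite_succ (k + 1), deriv_physHermite]
      simp
    simp only [eval_add, eval_mul, eval_sub, eval_C, eval_X, eval_pow]
    rw [hD m, hD (m + 2), hD (m + 4)]
    have e2 := hrec m
    have e3 := hrec (m + 1)
    have e4 := hrec (m + 2)
    have e5 := hrec (m + 3)
    norm_num at e3 e4 e5
    rw [show m + 4 + 1 = m + 5 from rfl, e5, e4, e3, e2]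
    push_cast
    have hne : ((m : ℝ) + 2) + 1 ≠ 0 := by positivity
    field_simp
    ring
end

section
/- The polynomials q_n(x) = (4x² - 2) H_{n-1}'(x) - 8x H_{n-1}(x), for n ≥ 1, satisfy q_n''(x) - (2(2x³ + 3x)/(2x² - 1)) q_n'(x) + (8/(2x² - 1)) q_n(x) = -2n q_n(x) for all x with 2x² ≠ 1. -/
open Polynomial

lemma physHermite_deriv (m : ℕ) :
    derivative (physHermite (m + 1)) = C (2 * (m + 1) : ℝ) * physHermite m := by
  induction m with
  | zero => simp [physHermite]
  | succ k ih =>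
    rw [show physHermite (k + 2) = C 2 * X * physHermite (k+1) - derivative (physHermite (k+1)) from rfl]
    rw [derivative_sub, derivative_mul, derivative_mul, ih, derivative_mul,
      show physHermite (k + 1) = C 2 * X * physHermite k - derivative (physHermite k) from rfl]
    push_cast
    simp only [derivative_C, derivative_X, derivative_ofNat, derivative_one, derivative_add,
      derivative_mul, C_add, C_mul, C_1, map_ofNat]
    ring

lemma physHermite_ode (m : ℕ) :
    derivative (derivative (physHermite m)) =
      C 2 * X * derivative (physHermite m) - C (2 * m : ℝ) * physHermite m := by
  cases m with
  | zero => simp [physHermite]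
  | succ k =>
    rw [physHermite_deriv, derivative_mul, derivative_C,
      show physHermite (k + 1) = C 2 * X * physHermite k - derivative (physHermite k) from rfl]
    push_cast
    simp only [C_add, C_mul, C_1, map_ofNat]
    ring

/-- `q_n(x) = (4x²-2) H_{n-1}'(x) - 8x H_{n-1}(x)` satisfies the two-gap equation
`q_n'' - (2(2x³+3x)/(2x²-1)) q_n' + (8/(2x²-1)) q_n = -2n q_n` for all `x` with `2x² ≠ 1`. -/
theorem two_gap_polynomial_eigenfunction (n : ℕ) (hn : 1 ≤ n) :
    ∀ x : ℝ, 2 * x ^ 2 ≠ 1 →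
      (fun q : ℝ → ℝ =>
          deriv (deriv q) x - (2 * (2 * x ^ 3 + 3 * x) / (2 * x ^ 2 - 1)) * deriv q x
            + (8 / (2 * x ^ 2 - 1)) * q x)
        (fun y => (4 * y ^ 2 - 2) * (derivative (physHermite (n - 1))).eval y
            - 8 * y * (physHermite (n - 1)).eval y) =
      -2 * (n : ℝ) * ((4 * x ^ 2 - 2) * (derivative (physHermite (n - 1))).eval x
            - 8 * x * (physHermite (n - 1)).eval x) := by
  intro x hx
  obtain ⟨m, rfl⟩ : ∃ m, n = m + 1 := ⟨n - 1, (Nat.succ_pred_eq_of_pos hn).symm⟩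
  have hs : (2 * x ^ 2 - 1 : ℝ) ≠ 0 := sub_ne_zero.mpr hx
  set H := physHermite m with hH
  set dH := derivative H with hdH
  have h2 : derivative dH = 2 * X * dH - C ((2 * m : ℝ)) * H := by
    rw [hdH, hH, physHermite_ode]
    simp only [map_ofNat]
  set Q : Polynomial ℝ := (4 * X ^ 2 - 2) * dH - 8 * X * H with hQ
  have hfun : (fun y : ℝ => (4 * y ^ 2 - 2) * (derivative (physHermite (m + 1 - 1))).eval y
      - 8 * y * (physHermite (m + 1 - 1)).eval y) = fun y => Q.eval y := by
    funext y
    simp [hQ, ← hH, ← hdH]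
  have hQx : (4 * x ^ 2 - 2) * (derivative (physHermite (m + 1 - 1))).eval x
      - 8 * x * (physHermite (m + 1 - 1)).eval x = Q.eval x := by
    simp [hQ, ← hH, ← hdH]
  have hd1 : deriv (fun y : ℝ => Q.eval y) = fun y => (derivative Q).eval y := by
    funext y
    simpa using Polynomial.deriv (𝕜 := ℝ) (p := Q) (x := y)
  have hd2 : deriv (fun y : ℝ => (derivative Q).eval y) x
      = (derivative (derivative Q)).eval x := by
    simpa using Polynomial.deriv (𝕜 := ℝ) (p := derivative Q) (x := x)
  beta_reduce
  rw [hfun, hQx, hd1, hd2]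
  beta_reduce
  have E1 : derivative H = dH := hdH.symm
  have E2 : (derivative dH).eval x = 2 * x * dH.eval x - 2 * (m : ℝ) * H.eval x := by
    rw [h2]; simp
  have E3 : (derivative (derivative dH)).eval x
      = 2 * dH.eval x + 2 * x * (2 * x * dH.eval x - 2 * (m : ℝ) * H.eval x)
        - 2 * (m : ℝ) * dH.eval x := by
    conv_lhs => rw [h2]
    simp only [derivative_sub, derivative_mul, derivative_ofNat, derivative_X, derivative_C,
      E1, eval_sub, eval_add, eval_mul, eval_ofNat, eval_X, eval_C, zero_mul, mul_one,
      zero_add, add_zero]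
    rw [E2]
  rw [hQ]
  field_simp
  simp only [derivative_sub, derivative_add, derivative_mul, derivative_ofNat, derivative_X, derivative_X_pow,
    derivative_C, E1, eval_sub, eval_add, eval_mul, eval_pow, eval_ofNat, eval_X, eval_C,
    eval_natCast, eval_zero, derivative_zero, zero_mul, mul_one, zero_add, add_zero, E3, E2]
  push_cast
  ring
end

section
/- Conjugation of the two-gap operator: for every twice-differentiable f : ℝ → ℝ and every x with 2x² ≠ 1, with h(x) = e^{x²/2}(2x² - 1) and g = h·f, one has (1/h(x))·[ g''(x) - (2(2x³+3x)/(2x²-1)) g'(x) + (8/(2x²-1)) g(x) ] = f''(x) - x² f(x) - 3 f(x) + 2·(d²/dx²)(log(2x²-1))·f(x). -/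
private lemma hasDerivAt_h (y : ℝ) :
    HasDerivAt (fun y : ℝ => Real.exp (y ^ 2 / 2) * (2 * y ^ 2 - 1))
      (Real.exp (y ^ 2 / 2) * (2 * y ^ 3 + 3 * y)) y := by
  have h1 : HasDerivAt (fun y : ℝ => y ^ 2 / 2) y y := by
    simpa using (hasDerivAt_pow 2 y).div_const 2
  have h2 : HasDerivAt (fun y : ℝ => Real.exp (y ^ 2 / 2)) (Real.exp (y ^ 2 / 2) * y) y := by
    simpa [mul_comm] using h1.exp
  have h3 : HasDerivAt (fun y : ℝ => 2 * y ^ 2 - 1) (4 * y) y := by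
    have := ((hasDerivAt_pow 2 y).const_mul 2).sub_const 1
    simpa using this.congr_deriv (by ring)
  have := h2.mul h3
  refine this.congr_deriv ?_
  ring

private lemma hasDerivAt_h2 (y : ℝ) :
    HasDerivAt (fun y : ℝ => Real.exp (y ^ 2 / 2) * (2 * y ^ 3 + 3 * y))
      (Real.exp (y ^ 2 / 2) * (2 * y ^ 4 + 9 * y ^ 2 + 3)) y := by
  have h1 : HasDerivAt (fun y : ℝ => y ^ 2 / 2) y y := by
    simpa using (hasDerivAt_pow 2 y).div_const 2
  have h2 : HasDerivAt (fun y : ℝ => Real.exp (y ^ 2 / 2)) (Real.exp (y ^ 2 / 2) * y) y := by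
    simpa [mul_comm] using h1.exp
  have h3 : HasDerivAt (fun y : ℝ => 2 * y ^ 3 + 3 * y)
      (6 * y ^ 2 + 3) y := by
    have := ((hasDerivAt_pow 3 y).const_mul 2).add ((hasDerivAt_id y).const_mul 3)
    refine this.congr_deriv ?_
    · norm_num; ring
  have := h2.mul h3
  refine this.congr_deriv ?_
  ring

/-- Conjugation of the two-gap operator by `h(x) = e^{x²/2}(2x²-1)`:
`h⁻¹ ∘ L̃ ∘ h = ∂² - x² - 3 + 2 (log(2x²-1))''` pointwise for `2x² ≠ 1`,
where `(log(2x²-1))'' = -4(2x²+1)/(2x²-1)²`. -/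
theorem two_gap_conjugation (f : ℝ → ℝ)
    (hf : Differentiable ℝ f) (hf' : Differentiable ℝ (deriv f)) :
    ∀ x : ℝ, 2 * x ^ 2 ≠ 1 →
      (1 / (Real.exp (x ^ 2 / 2) * (2 * x ^ 2 - 1))) *
          ((fun g : ℝ → ℝ =>
              deriv (deriv g) x - (2 * (2 * x ^ 3 + 3 * x) / (2 * x ^ 2 - 1)) * deriv g x
                + (8 / (2 * x ^ 2 - 1)) * g x)
            (fun y => Real.exp (y ^ 2 / 2) * (2 * y ^ 2 - 1) * f y)) =
        deriv (deriv f) x - x ^ 2 * f x - 3 * f x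
          + 2 * (-4 * (2 * x ^ 2 + 1) / (2 * x ^ 2 - 1) ^ 2) * f x := by
  intro x hx
  have hx' : 2 * x ^ 2 - 1 ≠ 0 := sub_ne_zero.mpr hx
  have hE : Real.exp (x ^ 2 / 2) ≠ 0 := (Real.exp_pos _).ne'
  have hg1 : ∀ y : ℝ, HasDerivAt (fun y => Real.exp (y ^ 2 / 2) * (2 * y ^ 2 - 1) * f y)
      (Real.exp (y ^ 2 / 2) * (2 * y ^ 3 + 3 * y) * f y
        + Real.exp (y ^ 2 / 2) * (2 * y ^ 2 - 1) * deriv f y) y := fun y =>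
    (hasDerivAt_h y).mul (hf y).hasDerivAt
  have hderiv : deriv (fun y => Real.exp (y ^ 2 / 2) * (2 * y ^ 2 - 1) * f y)
      = fun y => Real.exp (y ^ 2 / 2) * (2 * y ^ 3 + 3 * y) * f y
        + Real.exp (y ^ 2 / 2) * (2 * y ^ 2 - 1) * deriv f y :=
    funext fun y => (hg1 y).deriv
  have h2 : HasDerivAt (fun y => Real.exp (y ^ 2 / 2) * (2 * y ^ 3 + 3 * y) * f y
        + Real.exp (y ^ 2 / 2) * (2 * y ^ 2 - 1) * deriv f y)
      (Real.exp (x ^ 2 / 2) * (2 * x ^ 4 + 9 * x ^ 2 + 3) * f x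
        + Real.exp (x ^ 2 / 2) * (2 * x ^ 3 + 3 * x) * deriv f x
        + (Real.exp (x ^ 2 / 2) * (2 * x ^ 3 + 3 * x) * deriv f x
        + Real.exp (x ^ 2 / 2) * (2 * x ^ 2 - 1) * deriv (deriv f) x)) x :=
    ((hasDerivAt_h2 x).mul (hf x).hasDerivAt).add ((hasDerivAt_h x).mul (hf' x).hasDerivAt)
  simp only [hderiv]
  rw [h2.deriv]
  have hx'' : x ^ 2 * 2 - 1 ≠ 0 := by rwa [mul_comm]
  field_simp
  ring
end

section
/- The Hermite operator and multiplication by x satisfy the third-order ad-condition: (ad H)³(x) − 4 (ad H)(x) = 0 as differential operators, where H = ∂² − 2x∂ and x denotes the multiplication operator. -/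
open Polynomial

namespace AdHermite

/-- The derivative `∂` as an endomorphism of `ℝ[x]`. -/
noncomputable def D : Module.End ℝ (Polynomial ℝ) := derivative

/-- Multiplication by `x` as an endomorphism of `ℝ[x]`. -/
noncomputable def Θ : Module.End ℝ (Polynomial ℝ) := LinearMap.mulLeft ℝ (X : Polynomial ℝ)

/-- The Hermite operator `H = ∂² - 2x∂` as an endomorphism of `ℝ[x]`. -/
noncomputable def H : Module.End ℝ (Polynomial ℝ) := D * D - 2 • (Θ * D)

/-- The commutator `ad X (Y) = XY - YX`. -/
noncomputable def ad (A B : Module.End ℝ (Polynomial ℝ)) : Module.End ℝ (Polynomial ℝ) := A * B - B * A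

/-- The ad-condition for the Hermite operator: `(ad H)³(x) - 4 (ad H)(x) = 0`. -/
theorem hermite_ad_condition : ad H (ad H (ad H Θ)) - 4 • ad H Θ = 0 := by
  apply LinearMap.ext; intro p
  simp only [ad, H, D, Θ, LinearMap.sub_apply, LinearMap.add_apply, Module.End.mul_apply, LinearMap.smul_apply,
    LinearMap.mulLeft_apply, LinearMap.zero_apply, derivative_mul, derivative_X, one_mul,
    smul_eq_mul, two_smul]
  simp only [derivative_add, derivative_sub, derivative_neg, derivative_mul, derivative_X,
    derivative_X_pow, derivative_ofNat, map_ofNat, mul_zero, zero_mul, mul_one, one_mul,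
    add_zero, zero_add, two_smul]
  ring

end AdHermite
end

section
/- The lowering identity (x d/dx − 1) ₁F₁(−n/2; 1/2; x²) = − ₁F₁(−n/2; −1/2; x²) holds for all natural numbers n and all real x. -/
open Polynomial

/-- The confluent hypergeometric function `₁F₁(a; b; z) = Σ_k (a)_k z^k / ((b)_k k!)`. -/
noncomputable def oneFOne (a b z : ℝ) : ℝ :=
  ∑' k : ℕ, (ascPochhammer ℝ k).eval a * z ^ k / ((ascPochhammer ℝ k).eval b * (Nat.factorial k))


lemma poch_lower (b : ℝ) (hb : ∀ j : ℕ, ((j:ℝ)+1)/4 ≤ |b + j|) :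
    ∀ k : ℕ, (Nat.factorial k : ℝ)/4^k ≤ |(ascPochhammer ℝ k).eval b| := by
  intro k
  induction k with
  | zero => simp
  | succ k ih =>
    rw [ascPochhammer_succ_eval, abs_mul, Nat.factorial_succ]
    push_cast
    calc ((k:ℝ)+1) * k.factorial / 4^(k+1)
        = (k.factorial / 4^k) * (((k:ℝ)+1)/4) := by ring
      _ ≤ |(ascPochhammer ℝ k).eval b| * |b + k| := by
          apply mul_le_mul ih (hb k) (by positivity)
          exact abs_nonneg _

lemma hb_half : ∀ j : ℕ, ((j:ℝ)+1)/4 ≤ |(1/2 : ℝ) + j| := by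
  intro j
  rw [abs_of_nonneg (by positivity)]
  linarith

lemma hb_neg_half : ∀ j : ℕ, ((j:ℝ)+1)/4 ≤ |(-1/2 : ℝ) + j| := by
  intro j
  rcases j with _ | j
  · push_cast
    rw [add_zero, abs_of_nonpos (by norm_num)]
    norm_num
  · push_cast
    rw [abs_of_nonneg (by push_cast; linarith)]
    push_cast
    linarith

lemma poch_half_pos (k : ℕ) : (0:ℝ) < |(ascPochhammer ℝ k).eval (1/2 : ℝ)| :=
  lt_of_lt_of_le (by positivity) (poch_lower _ hb_half k)

lemma poch_half_ne (k : ℕ) : (ascPochhammer ℝ k).eval (1/2 : ℝ) ≠ 0 := by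
  have := poch_half_pos k; intro h; rw [h] at this; simp at this

lemma poch_neg_half_ne (k : ℕ) : (ascPochhammer ℝ k).eval (-1/2 : ℝ) ≠ 0 := by
  have := lt_of_lt_of_le (show (0:ℝ) < (Nat.factorial k : ℝ)/4^k by positivity)
    (poch_lower _ hb_neg_half k)
  intro h; rw [h] at this; simp at this

lemma poch_abs_le (a : ℝ) : ∀ k : ℕ,
    |(ascPochhammer ℝ k).eval a| ≤ (ascPochhammer ℝ k).eval (|a|+1) := by
  intro k
  induction k with
  | zero => simp
  | succ k ih =>
    rw [ascPochhammer_succ_eval, ascPochhammer_succ_eval, abs_mul]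
    apply mul_le_mul ih _ (abs_nonneg _) (le_trans (abs_nonneg _) ih)
    calc |a + k| ≤ |a| + k := by exact abs_add_le _ _ |>.trans (by simp)
      _ ≤ |a| + 1 + k := by linarith

lemma poch_pos (a : ℝ) (ha : 0 < a) : ∀ k : ℕ, 0 < (ascPochhammer ℝ k).eval a := by
  intro k
  induction k with
  | zero => simp
  | succ k ih =>
    rw [ascPochhammer_succ_eval]
    have : (0:ℝ) < a + k := by positivity
    positivity

lemma poch_le_pow (a : ℝ) (ha : 1 ≤ a) : ∀ k : ℕ,
    (ascPochhammer ℝ k).eval a ≤ a^k * (Nat.factorial k : ℝ) := by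
  intro k
  induction k with
  | zero => simp
  | succ k ih =>
    rw [ascPochhammer_succ_eval, Nat.factorial_succ]
    push_cast
    calc (ascPochhammer ℝ k).eval a * (a + k) ≤ (a^k * k.factorial) * (a * (k+1)) := by
          apply mul_le_mul ih _ _ (by positivity)
          · nlinarith [Nat.cast_nonneg (α := ℝ) k]
          · have := (poch_pos a (by linarith) k).le
            positivity
      _ = a^(k+1) * (((k:ℝ)+1) * k.factorial) := by ring

lemma majorant_summable (A r : ℝ) (hA : 0 ≤ A) (hr : 0 ≤ r) :
    Summable (fun k : ℕ => ((k:ℝ)+1) * (ascPochhammer ℝ k).eval (A+1) * r^k * 4^k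
      / ((Nat.factorial k : ℝ) * (Nat.factorial k : ℝ))) := by
  apply Summable.of_nonneg_of_le
    (f := fun k : ℕ => (8*(A+1)*r)^k / (Nat.factorial k : ℝ))
  · intro k
    have := (poch_pos (A+1) (by linarith) k).le
    positivity
  · intro k
    have hfac : (0:ℝ) < (Nat.factorial k : ℝ) := by positivity
    rw [div_le_div_iff₀ (by positivity) hfac]
    have h1 : (ascPochhammer ℝ k).eval (A+1) ≤ (A+1)^k * (Nat.factorial k : ℝ) :=
      poch_le_pow (A+1) (by linarith) k
    have h2 : ((k:ℝ)+1) ≤ 2^k := by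
      exact_mod_cast Nat.succ_le_of_lt (Nat.lt_two_pow_self (n := k))
    calc ((k:ℝ)+1) * (ascPochhammer ℝ k).eval (A+1) * r^k * 4^k * Nat.factorial k
        ≤ 2^k * ((A+1)^k * (Nat.factorial k : ℝ)) * r^k * 4^k * Nat.factorial k := by
          apply mul_le_mul_of_nonneg_right _ hfac.le
          apply mul_le_mul_of_nonneg_right _ (by positivity)
          apply mul_le_mul_of_nonneg_right _ (by positivity)
          exact mul_le_mul h2 h1 (poch_pos (A+1) (by linarith) k).le (by positivity)
      _ = (8*(A+1)*r)^k * ((Nat.factorial k : ℝ) * Nat.factorial k) := by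
          rw [mul_pow, mul_pow, show (8:ℝ) = 2*4 by norm_num, mul_pow]
          ring
  · exact Real.summable_pow_div_factorial _



lemma poch_key : ∀ k : ℕ, (2*(k:ℝ)-1) * (ascPochhammer ℝ k).eval (-1/2:ℝ)
    = -(ascPochhammer ℝ k).eval (1/2:ℝ) := by
  intro k
  induction k with
  | zero => simp
  | succ k ih =>
    rw [ascPochhammer_succ_eval, ascPochhammer_succ_eval]
    push_cast
    linear_combination ((k:ℝ)+1/2) * ih

noncomputable def cc (a : ℝ) (k : ℕ) : ℝ :=
  (ascPochhammer ℝ k).eval a / ((ascPochhammer ℝ k).eval (1/2:ℝ) * (Nat.factorial k))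

noncomputable def dd (a : ℝ) (k : ℕ) : ℝ :=
  (ascPochhammer ℝ k).eval a / ((ascPochhammer ℝ k).eval (-1/2:ℝ) * (Nat.factorial k))

lemma cc_key (a : ℝ) (k : ℕ) : (2*(k:ℝ)-1) * cc a k = -(dd a k) := by
  unfold cc dd
  have h1 := poch_half_ne k
  have h2 := poch_neg_half_ne k
  have h3 : (Nat.factorial k : ℝ) ≠ 0 := Nat.cast_ne_zero.mpr k.factorial_ne_zero
  rw [neg_div] at h2 ⊢
  field_simp
  linear_combination ((ascPochhammer ℝ k).eval a) * (by simpa only [neg_div] using poch_key k : (2*(k:ℝ)-1) * (ascPochhammer ℝ k).eval (-(1/2):ℝ) = -(ascPochhammer ℝ k).eval (1/2:ℝ))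

lemma cc_abs_le (a : ℝ) (k : ℕ) :
    |cc a k| ≤ (ascPochhammer ℝ k).eval (|a|+1) * 4^k
      / ((Nat.factorial k : ℝ) * (Nat.factorial k : ℝ)) := by
  have h1 := poch_abs_le a k
  have h2 := poch_lower _ hb_half k
  have hP := poch_pos (|a|+1) (by positivity) k
  have hhalfpos : (0:ℝ) < |(ascPochhammer ℝ k).eval (1/2:ℝ)| :=
    lt_of_lt_of_le (by positivity) h2
  have hfac : (0:ℝ) < (Nat.factorial k : ℝ) := by positivity
  unfold cc
  rw [abs_div, abs_mul, Nat.abs_cast, div_le_iff₀ (by positivity)]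
  calc |(ascPochhammer ℝ k).eval a| ≤ (ascPochhammer ℝ k).eval (|a|+1) := h1
    _ = ((ascPochhammer ℝ k).eval (|a|+1) * 4^k / ((Nat.factorial k : ℝ) * Nat.factorial k))
        * ((Nat.factorial k / 4^k) * Nat.factorial k) := by
        field_simp
    _ ≤ _ := by gcongr

lemma oneFOne_half (a y : ℝ) : oneFOne a (1/2) (y^2) = ∑' k : ℕ, cc a k * y^(2*k) := by
  unfold oneFOne
  refine tsum_congr fun k => ?_
  rw [pow_mul]
  unfold cc
  ring

lemma oneFOne_neg_half (a y : ℝ) : oneFOne a (-1/2) (y^2) = ∑' k : ℕ, dd a k * y^(2*k) := by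
  unfold oneFOne
  refine tsum_congr fun k => ?_
  rw [pow_mul]
  unfold dd
  ring

/-- The lowering identity `(x d/dx - 1) ₁F₁(-n/2; 1/2; x²) = -₁F₁(-n/2; -1/2; x²)`. -/
theorem lowering_identity_even (n : ℕ) :
    ∀ x : ℝ,
      x * deriv (fun y => oneFOne (-(n : ℝ) / 2) (1 / 2) (y ^ 2)) x
          - oneFOne (-(n : ℝ) / 2) (1 / 2) (x ^ 2) =
        -oneFOne (-(n : ℝ) / 2) (-1 / 2) (x ^ 2) := by
  intro x
  set a : ℝ := -(n : ℝ) / 2 with ha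
  set R : ℝ := |x| + 1 with hR
  have hR0 : (0:ℝ) < R := by positivity
  have hxR : |x| < R := by rw [hR]; linarith
  have hPpos : ∀ k : ℕ, 0 < (ascPochhammer ℝ k).eval (|a|+1) :=
    fun k => poch_pos _ (by positivity) k
  have hu : Summable (fun k : ℕ => (2/R) * (((k:ℝ)+1) * (ascPochhammer ℝ k).eval (|a|+1)
      * (R^2)^k * 4^k / ((Nat.factorial k : ℝ) * (Nat.factorial k : ℝ)))) :=
    (majorant_summable (|a|) (R^2) (abs_nonneg a) (by positivity)).mul_left _
  have hpow : ∀ k : ℕ, ((2*k : ℕ):ℝ) * R^(2*k-1) ≤ (2/R) * (((k:ℝ)+1) * (R^2)^k) := by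
    intro k
    cases k with
    | zero => simp; positivity
    | succ k =>
      have hexp : 2*(k+1)-1 = 2*k+1 := by omega
      have e : ((R:ℝ)^2)^(k+1) = R^(2*k+1) * R := by
        rw [← pow_mul, show 2*(k+1) = (2*k+1)+1 by ring, pow_succ]
      rw [hexp, e]
      push_cast
      have hpw : (0:ℝ) ≤ R^(2*k+1) := by positivity
      rw [div_mul_eq_mul_div, le_div_iff₀ hR0]
      nlinarith [Nat.cast_nonneg (α := ℝ) k]
  have hbound : ∀ k : ℕ, ∀ y : ℝ, y ∈ Metric.ball (0:ℝ) R →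
      ‖cc a k * (((2*k : ℕ):ℝ) * y^(2*k-1))‖ ≤ (2/R) * (((k:ℝ)+1)
        * (ascPochhammer ℝ k).eval (|a|+1) * (R^2)^k * 4^k
        / ((Nat.factorial k : ℝ) * (Nat.factorial k : ℝ))) := by
    intro k y hy
    have hyR : |y| ≤ R := by
      have := Metric.mem_ball.mp hy
      rw [Real.dist_eq, sub_zero] at this
      exact this.le
    have h1 : ‖cc a k * (((2*k : ℕ):ℝ) * y^(2*k-1))‖
        = |cc a k| * (((2*k : ℕ):ℝ) * |y|^(2*k-1)) := by
      simp [Real.norm_eq_abs, abs_mul, abs_pow]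
    rw [h1]
    calc |cc a k| * (((2*k : ℕ):ℝ) * |y|^(2*k-1))
        ≤ |cc a k| * (((2*k : ℕ):ℝ) * R^(2*k-1)) := by
          gcongr
      _ ≤ ((ascPochhammer ℝ k).eval (|a|+1) * 4^k
            / ((Nat.factorial k : ℝ) * Nat.factorial k))
            * ((2/R) * (((k:ℝ)+1) * (R^2)^k)) := by
          apply mul_le_mul (cc_abs_le a k) (hpow k) (by positivity)
          have := (hPpos k).le
          positivity
      _ = _ := by ring
  have hxball : x ∈ Metric.ball (0:ℝ) R := by
    rw [Metric.mem_ball, Real.dist_eq, sub_zero]; exact hxR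
  have hg0 : Summable (fun k : ℕ => cc a k * x^(2*k)) := by
    apply Summable.of_norm_bounded
      (majorant_summable (|a|) (R^2) (abs_nonneg a) (by positivity))
    intro k
    have h1 : ‖cc a k * x^(2*k)‖ = |cc a k| * |x|^(2*k) := by
      simp [Real.norm_eq_abs, abs_mul, abs_pow]
    rw [h1]
    calc |cc a k| * |x|^(2*k)
        ≤ ((ascPochhammer ℝ k).eval (|a|+1) * 4^k
            / ((Nat.factorial k : ℝ) * Nat.factorial k)) * (R^2)^k := by
          apply mul_le_mul (cc_abs_le a k) _ (by positivity)
          · have := (hPpos k).le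
            positivity
          · rw [pow_mul]
            exact pow_le_pow_left₀ (by positivity) (by nlinarith [abs_nonneg x]) _
      _ ≤ ((k:ℝ)+1) * (((ascPochhammer ℝ k).eval (|a|+1) * 4^k
            / ((Nat.factorial k : ℝ) * Nat.factorial k)) * (R^2)^k) := by
          apply le_mul_of_one_le_left
          · have := (hPpos k).le
            positivity
          · linarith [Nat.cast_nonneg (α := ℝ) k]
      _ = ((k:ℝ)+1) * (ascPochhammer ℝ k).eval (|a|+1) * (R^2)^k * 4^k
            / ((Nat.factorial k : ℝ) * Nat.factorial k) := by ring
  have hder : HasDerivAt (fun y : ℝ => ∑' k : ℕ, cc a k * y^(2*k))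
      (∑' k : ℕ, cc a k * (((2*k : ℕ):ℝ) * x^(2*k-1))) x :=
    hasDerivAt_tsum_of_isPreconnected hu Metric.isOpen_ball
      (convex_ball (0:ℝ) R).isPreconnected
      (fun k y _ => (hasDerivAt_pow (2*k) y).const_mul (cc a k))
      (fun k y hy => hbound k y hy) hxball hg0 hxball
  have hg'sum : Summable (fun k : ℕ => x * (cc a k * (((2*k : ℕ):ℝ) * x^(2*k-1)))) :=
    (Summable.of_norm_bounded hu (fun k => hbound k x hxball)).mul_left x
  have hfun : (fun y : ℝ => oneFOne a (1/2) (y^2))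
      = fun y : ℝ => ∑' k : ℕ, cc a k * y^(2*k) := by
    funext y
    exact oneFOne_half a y
  rw [hfun, hder.deriv, oneFOne_half, oneFOne_neg_half, ← tsum_mul_left,
    ← Summable.tsum_sub hg'sum hg0, ← tsum_neg]
  refine tsum_congr fun k => ?_
  have hk := cc_key a k
  have hxx : x * (((2*k : ℕ):ℝ) * x^(2*k-1)) = ((2*k : ℕ):ℝ) * x^(2*k) := by
    cases k with
    | zero => simp
    | succ k =>
      have h1 : 2*(k+1)-1 = 2*k+1 := by omega
      have h2 : 2*(k+1) = 2*k+2 := by omega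
      rw [h1, h2, pow_succ]
      push_cast
      ring
  push_cast at hxx hk ⊢
  linear_combination cc a k * hxx + x^(2*k) * hk
end
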